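/- In the discrete oscillator group L = H₁ʳ(ℤ) ⋊_S ℤδ with trivial induced action (S̄ = I₂), where S(α) = α·γᵏ, S(β) = β·γˡ, S(γ) = γ, the center of L equals the subgroup generated by γ and α^a β^b δ^d, where r₀ = gcd(k, l, r), a = -l/r₀, b = k/r₀, d = r/r₀. Moreover the commutator subgroup [L,L] is generated by γ^{r₀}. -/

import Mathlib

/-- The discrete Heisenberg group `H₁ʳ(ℤ)`: elements `α^x β^y γ^z` in normal form,
with `[α,β] = γ^r` and `γ` central. -/
@[ext]
structure Heis (r : ℤ) where
  x : ℤ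
  y : ℤ
  z : ℤ

namespace Heis

variable {r : ℤ}

instance : Mul (Heis r) :=
  ⟨fun a b => ⟨a.x + b.x, a.y + b.y, a.z + b.z + r * a.x * b.y⟩⟩

instance : One (Heis r) := ⟨⟨0, 0, 0⟩⟩

instance : Inv (Heis r) := ⟨fun a => ⟨-a.x, -a.y, -a.z + r * a.x * a.y⟩⟩

@[simp] theorem mul_x (a b : Heis r) : (a * b).x = a.x + b.x := rfl
@[simp] theorem mul_y (a b : Heis r) : (a * b).y = a.y + b.y := rfl
@[simp] theorem mul_z (a b : Heis r) : (a * b).z = a.z + b.z + r * a.x * b.y := rfl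
@[simp] theorem one_x : (1 : Heis r).x = 0 := rfl
@[simp] theorem one_y : (1 : Heis r).y = 0 := rfl
@[simp] theorem one_z : (1 : Heis r).z = 0 := rfl
@[simp] theorem inv_x (a : Heis r) : (a⁻¹).x = -a.x := rfl
@[simp] theorem inv_y (a : Heis r) : (a⁻¹).y = -a.y := rfl
@[simp] theorem inv_z (a : Heis r) : (a⁻¹).z = -a.z + r * a.x * a.y := rfl

instance : Group (Heis r) where
  mul_assoc a b c := by ext <;> simp <;> ring
  one_mul a := by ext <;> simp
  mul_one a := by ext <;> simp
  inv_mul_cancel a := by ext <;> simp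

/-- The generator `α` of the discrete Heisenberg group. -/
def α : Heis r := ⟨1, 0, 0⟩
/-- The generator `β` of the discrete Heisenberg group. -/
def β : Heis r := ⟨0, 1, 0⟩
/-- The central generator `γ` of the discrete Heisenberg group. -/
def γ : Heis r := ⟨0, 0, 1⟩

end Heis

set_option maxHeartbeats 1000000

namespace Heis

variable {r : ℤ}

theorem xline_zpow (u c : ℤ) : ∀ n : ℤ, (⟨u, 0, c⟩ : Heis r) ^ n = ⟨n * u, 0, n * c⟩ := by
  intro n
  induction n using Int.induction_on with
  | zero => ext <;> simp
  | succ n ih => rw [zpow_add_one, ih]; ext <;> simp <;> ring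
  | pred n ih => rw [zpow_sub_one, ih]; ext <;> simp <;> ring

theorem yline_zpow (v c : ℤ) : ∀ n : ℤ, (⟨0, v, c⟩ : Heis r) ^ n = ⟨0, n * v, n * c⟩ := by
  intro n
  induction n using Int.induction_on with
  | zero => ext <;> simp
  | succ n ih => rw [zpow_add_one, ih]; ext <;> simp <;> ring
  | pred n ih => rw [zpow_sub_one, ih]; ext <;> simp <;> ring

theorem gamma_zpow (n : ℤ) : (γ : Heis r) ^ n = ⟨0, 0, n⟩ := by
  simpa [γ] using yline_zpow (r := r) 0 1 n

theorem alpha_zpow (n : ℤ) : (α : Heis r) ^ n = ⟨n, 0, 0⟩ := by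
  simpa [α] using xline_zpow (r := r) 1 0 n

theorem beta_zpow (n : ℤ) : (β : Heis r) ^ n = ⟨0, n, 0⟩ := by
  simpa [β] using yline_zpow (r := r) 1 0 n

end Heis

/-- the "shear" automorphism of `Heis r`. -/
def shear (r k l n : ℤ) : Heis r ≃* Heis r where
  toFun g := ⟨g.x, g.y, g.z + n * (k * g.x + l * g.y)⟩
  invFun g := ⟨g.x, g.y, g.z - n * (k * g.x + l * g.y)⟩
  left_inv g := by ext <;> simp
  right_inv g := by ext <;> simp
  map_mul' g h := by ext <;> simp <;> ring

/-- The homomorphism `Multiplicative ℤ →* MulAut (Heis r)` built from shears. -/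
def shearHom (r k l : ℤ) : Multiplicative ℤ →* MulAut (Heis r) where
  toFun m := shear r k l m.toAdd
  map_one' := by ext g <;> simp [shear]
  map_mul' m₁ m₂ := by ext g <;> simp [shear] <;> ring

theorem phi_apply {r k l : ℤ} (φ : Multiplicative ℤ →* MulAut (Heis r))
    (hα : φ (Multiplicative.ofAdd 1) Heis.α = Heis.α * Heis.γ ^ k)
    (hβ : φ (Multiplicative.ofAdd 1) Heis.β = Heis.β * Heis.γ ^ l)
    (hγ : φ (Multiplicative.ofAdd 1) Heis.γ = Heis.γ)
    (m : Multiplicative ℤ) (g : Heis r) :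
    φ m g = ⟨g.x, g.y, g.z + m.toAdd * (k * g.x + l * g.y)⟩ := by
  have key : φ = shearHom r k l := by
    apply MonoidHom.ext_mint
    apply MulEquiv.ext
    intro g
    obtain ⟨x, y, z⟩ := g
    have hdec : (⟨x, y, z⟩ : Heis r) = Heis.α ^ x * Heis.β ^ y * Heis.γ ^ (z - r * x * y) := by
      rw [Heis.alpha_zpow, Heis.beta_zpow, Heis.gamma_zpow]
      ext <;> simp <;> ring
    rw [hdec, map_mul, map_mul, map_zpow, map_zpow, map_zpow, hα, hβ, hγ]
    have h1 : (Heis.α * Heis.γ ^ k : Heis r) = ⟨1, 0, k⟩ := by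
      rw [Heis.gamma_zpow]; ext <;> simp [Heis.α]
    have h2 : (Heis.β * Heis.γ ^ l : Heis r) = ⟨0, 1, l⟩ := by
      rw [Heis.gamma_zpow]; ext <;> simp [Heis.β]
    rw [h1, h2, Heis.xline_zpow, Heis.yline_zpow, Heis.gamma_zpow]
    show _ = (shear r k l _) _
    ext <;> simp [shear, Heis.alpha_zpow, Heis.beta_zpow, Heis.gamma_zpow] <;> ring
  rw [key]; rfl


open SemidirectProduct
open scoped commutatorElement

/-- Centre and commutator subgroup of a discrete oscillator group
`L = H₁ʳ(ℤ) ⋊_S ℤδ` with trivial induced action `S̄ = I₂`, where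
`S(α) = αγᵏ`, `S(β) = βγˡ`, `S(γ) = γ`:  with `r₀ = gcd(k,l,r)`, `a = -l/r₀`,
`b = k/r₀`, `d = r/r₀`, the centre of `L` equals `⟨γ, α^a β^b δ^d⟩` and the
commutator subgroup `[L,L]` is generated by `γ^{r₀}`. -/
theorem center_and_commutator_of_discrete_oscillator_group
    (r k l : ℤ) (hr : 0 < r)
    (φ : Multiplicative ℤ →* MulAut (Heis r))
    (hα : φ (Multiplicative.ofAdd 1) Heis.α = Heis.α * Heis.γ ^ k)
    (hβ : φ (Multiplicative.ofAdd 1) Heis.β = Heis.β * Heis.γ ^ l)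
    (hγ : φ (Multiplicative.ofAdd 1) Heis.γ = Heis.γ)
    (r₀ a b d : ℤ) (hr₀ : r₀ = Int.gcd k (Int.gcd l r))
    (ha : a * r₀ = -l) (hb : b * r₀ = k) (hd : d * r₀ = r) :
    Subgroup.center (Heis r ⋊[φ] Multiplicative ℤ) =
      Subgroup.closure {SemidirectProduct.inl Heis.γ,
        (SemidirectProduct.inl Heis.α) ^ a * (SemidirectProduct.inl Heis.β) ^ b *
          (SemidirectProduct.inr (Multiplicative.ofAdd 1)) ^ d} ∧
    commutator (Heis r ⋊[φ] Multiplicative ℤ) =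
      Subgroup.closure {SemidirectProduct.inl (Heis.γ ^ r₀)} := by
  have hφ := phi_apply φ hα hβ hγ
  -- positivity of r₀
  have hr₀pos : 0 < r₀ := by
    rw [hr₀]
    have h0 : 0 < Int.gcd k (Int.gcd l r) :=
      Int.gcd_pos_of_ne_zero_right _ (by
        simp only [ne_eq, Int.natCast_eq_zero, Int.gcd_eq_zero_iff]
        omega)
    exact_mod_cast h0
  -- Bezout
  obtain ⟨u, v, w, hbez⟩ : ∃ u v w : ℤ, k * u + l * v + r * w = r₀ := by
    refine ⟨Int.gcdA k (Int.gcd l r), Int.gcdA l r * Int.gcdB k (Int.gcd l r),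
      Int.gcdB l r * Int.gcdB k (Int.gcd l r), ?_⟩
    have h1 := Int.gcd_eq_gcd_ab l r
    have h2 := Int.gcd_eq_gcd_ab k (Int.gcd l r)
    rw [hr₀]
    linear_combination -h2 - Int.gcdB k (Int.gcd l r) * h1
  have hdpos : 0 < d := by nlinarith
  have hab : k * a + l * b = 0 := by linear_combination (-a) * hb + b * ha
  set W : Heis r ⋊[φ] Multiplicative ℤ :=
    (SemidirectProduct.inl Heis.α) ^ a * (SemidirectProduct.inl Heis.β) ^ b *
      (SemidirectProduct.inr (Multiplicative.ofAdd 1)) ^ d with hWdef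
  have hW : W = ⟨⟨a, b, r * a * b⟩, Multiplicative.ofAdd d⟩ := by
    rw [hWdef, ← map_zpow, ← map_zpow, ← map_zpow, Heis.alpha_zpow, Heis.beta_zpow]
    have : (Multiplicative.ofAdd 1) ^ d = Multiplicative.ofAdd d := by
      rw [← ofAdd_zsmul]; norm_num
    rw [this]
    ext <;> simp [hφ] <;> ring
  -- coordinate formulas for the semidirect product
  have hmul : ∀ x1 y1 z1 n1 x2 y2 z2 n2 : ℤ,
      (⟨⟨x1, y1, z1⟩, Multiplicative.ofAdd n1⟩ : Heis r ⋊[φ] Multiplicative ℤ) *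
        ⟨⟨x2, y2, z2⟩, Multiplicative.ofAdd n2⟩ =
      ⟨⟨x1 + x2, y1 + y2, z1 + z2 + n1 * (k * x2 + l * y2) + r * x1 * y2⟩,
        Multiplicative.ofAdd (n1 + n2)⟩ := by
    intros x1 y1 z1 n1 x2 y2 z2 n2
    refine SemidirectProduct.ext ?_ ?_
    · show (⟨x1,y1,z1⟩ : Heis r) * φ (Multiplicative.ofAdd n1) ⟨x2,y2,z2⟩ = _
      rw [hφ]
      ext <;> simp <;> ring
    · show Multiplicative.ofAdd n1 * Multiplicative.ofAdd n2 = _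
      rw [← ofAdd_add]
  have hinv : ∀ x1 y1 z1 n1 : ℤ,
      (⟨⟨x1, y1, z1⟩, Multiplicative.ofAdd n1⟩ : Heis r ⋊[φ] Multiplicative ℤ)⁻¹ =
      ⟨⟨-x1, -y1, -z1 + r * x1 * y1 + n1 * (k * x1 + l * y1)⟩,
        Multiplicative.ofAdd (-n1)⟩ := by
    intros x1 y1 z1 n1
    refine SemidirectProduct.ext ?_ ?_
    · show φ (Multiplicative.ofAdd n1)⁻¹ (⟨x1,y1,z1⟩ : Heis r)⁻¹ = _
      rw [show (Multiplicative.ofAdd n1)⁻¹ = Multiplicative.ofAdd (-n1) from rfl, hφ]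
      ext <;> simp <;> ring
    · rfl
  have hmk : ∀ x1 y1 z1 n1 x2 y2 z2 n2 : ℤ, x1 = x2 → y1 = y2 → z1 = z2 → n1 = n2 →
      (⟨⟨x1, y1, z1⟩, Multiplicative.ofAdd n1⟩ : Heis r ⋊[φ] Multiplicative ℤ) =
      ⟨⟨x2, y2, z2⟩, Multiplicative.ofAdd n2⟩ := by
    rintro _ _ _ _ _ _ _ _ rfl rfl rfl rfl; rfl
  -- γ is central
  have hγcen : (inl Heis.γ : Heis r ⋊[φ] Multiplicative ℤ) ∈
      Subgroup.center (Heis r ⋊[φ] Multiplicative ℤ) := by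
    refine Subgroup.mem_center_iff.mpr fun g => ?_
    obtain ⟨⟨x, y, z⟩, m⟩ := g
    have hm : m = Multiplicative.ofAdd m.toAdd := rfl
    have hγ1 : (inl Heis.γ : Heis r ⋊[φ] Multiplicative ℤ) =
        ⟨⟨0, 0, 1⟩, Multiplicative.ofAdd 0⟩ := rfl
    rw [hm, hγ1, hmul, hmul]
    exact hmk _ _ _ _ _ _ _ _ (by ring) (by ring) (by ring) (by ring)
  -- W is central
  have hWcen : W ∈ Subgroup.center (Heis r ⋊[φ] Multiplicative ℤ) := by
    refine Subgroup.mem_center_iff.mpr fun g => ?_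
    obtain ⟨⟨x, y, z⟩, m⟩ := g
    have hm : m = Multiplicative.ofAdd m.toAdd := rfl
    rw [hW, hm, hmul, hmul]
    refine hmk _ _ _ _ _ _ _ _ (by ring) (by ring) ?_ (by ring)
    linear_combination (Multiplicative.toAdd m) * hab + (x * d) * hb - (y * d) * ha + (y * a - x * b) * hd
  -- zpow formula for W
  have hWpow : ∀ t : ℤ, ∃ e : ℤ, W ^ t = ⟨⟨t * a, t * b, e⟩, Multiplicative.ofAdd (t * d)⟩ := by
    intro t
    induction t using Int.induction_on with
    | zero => exact ⟨0, by ext <;> simp⟩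
    | succ t ih =>
      obtain ⟨e, he⟩ := ih
      refine ⟨e + r * a * b + r * (t * a) * b + (t : ℤ) * d * (k * a + l * b), ?_⟩
      rw [zpow_add_one, he, hW, hmul]
      exact hmk _ _ _ _ _ _ _ _ (by ring) (by ring) (by ring) (by ring)
    | pred t ih =>
      obtain ⟨e, he⟩ := ih
      refine ⟨e + (-r * a * b + r * a * b) +
        (-(t : ℤ) * d) * (k * (-a) + l * (-b)) + r * (-(t : ℤ) * a) * (-b) +
        d * (k * a + l * b), ?_⟩
      rw [zpow_sub_one, he, hW, hinv, hmul]
      exact hmk _ _ _ _ _ _ _ _ (by ring) (by ring) (by ring) (by ring)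
  constructor
  · -- centre = closure
    refine le_antisymm ?_ ((Subgroup.closure_le _).mpr ?_)
    · intro g hg
      obtain ⟨⟨x, y, z⟩, m⟩ := g
      have hm : m = Multiplicative.ofAdd m.toAdd := rfl
      set n := Multiplicative.toAdd m with hndef
      have e1 : r * y = n * k := by
        have h1 := Subgroup.mem_center_iff.mp hg (inl Heis.α)
        rw [show (inl Heis.α : Heis r ⋊[φ] Multiplicative ℤ) =
          ⟨⟨1, 0, 0⟩, Multiplicative.ofAdd 0⟩ from rfl, hm, hmul, hmul] at h1
        have h2 := congrArg (fun v => v.left.z) h1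
        simp at h2
        linarith
      have e2 : n * l + r * x = 0 := by
        have h1 := Subgroup.mem_center_iff.mp hg (inl Heis.β)
        rw [show (inl Heis.β : Heis r ⋊[φ] Multiplicative ℤ) =
          ⟨⟨0, 1, 0⟩, Multiplicative.ofAdd 0⟩ from rfl, hm, hmul, hmul] at h1
        have h2 := congrArg (fun v => v.left.z) h1
        simp at h2
        linarith
      obtain ⟨c, hc⟩ : ∃ c : ℤ, n * r₀ = r * c :=
        ⟨y * u - x * v + n * w, by linear_combination (-n) * hbez - u * e1 + v * e2⟩
      have hnc : n = d * c := by
        have h3 : n * r₀ = (d * c) * r₀ := by linear_combination hc - c * hd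
        exact mul_right_cancel₀ (by positivity) h3
      have hx : x = c * a := by
        have h3 : r * x = r * (c * a) := by
          linear_combination e2 - n * ha + (a * r₀) * hnc + (a * c) * hd
        exact mul_left_cancel₀ (by positivity) h3
      have hy : y = c * b := by
        have h3 : r * y = r * (c * b) := by
          linear_combination e1 - n * hb + (b * r₀) * hnc + (b * c) * hd
        exact mul_left_cancel₀ (by positivity) h3
      obtain ⟨e, he⟩ := hWpow c
      have hγz : (inl (Heis.γ ^ (z - e)) : Heis r ⋊[φ] Multiplicative ℤ) =
          ⟨⟨0, 0, z - e⟩, Multiplicative.ofAdd 0⟩ := by rw [Heis.gamma_zpow]; rfl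
      have hgeq : (⟨⟨x, y, z⟩, m⟩ : Heis r ⋊[φ] Multiplicative ℤ) =
          (inl Heis.γ) ^ (z - e) * W ^ c := by
        rw [← map_zpow, hγz, he, hmul, hm]
        exact hmk _ _ _ _ _ _ _ _ (by linarith) (by linarith) (by ring) (by linarith)
      rw [hgeq]
      have m1 : (inl Heis.γ : Heis r ⋊[φ] Multiplicative ℤ) ∈
          Subgroup.closure {inl Heis.γ, W} :=
        Subgroup.subset_closure (Set.mem_insert _ _)
      have m2 : W ∈ Subgroup.closure {inl Heis.γ, W} :=
        Subgroup.subset_closure (Set.mem_insert_of_mem _ rfl)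
      exact Subgroup.mul_mem _ (Subgroup.zpow_mem _ m1 _) (Subgroup.zpow_mem _ m2 _)
    · rintro g (rfl | rfl)
      · exact hγcen
      · exact hWcen
  · -- commutator subgroup
    apply le_antisymm
    · rw [commutator_def, Subgroup.commutator_le]
      intro g _ h _
      obtain ⟨⟨x1, y1, z1⟩, m1⟩ := g
      obtain ⟨⟨x2, y2, z2⟩, m2⟩ := h
      have hm1 : m1 = Multiplicative.ofAdd m1.toAdd := rfl
      have hm2 : m2 = Multiplicative.ofAdd m2.toAdd := rfl
      set n1 := Multiplicative.toAdd m1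
      set n2 := Multiplicative.toAdd m2
      rw [Subgroup.mem_closure_singleton]
      refine ⟨n1 * (b * x2 - a * y2) - n2 * (b * x1 - a * y1) + d * (x1 * y2 - x2 * y1), ?_⟩
      rw [← map_zpow, ← zpow_mul, Heis.gamma_zpow,
        show (inl (⟨0, 0, r₀ * (n1 * (b * x2 - a * y2) - n2 * (b * x1 - a * y1) +
          d * (x1 * y2 - x2 * y1))⟩ : Heis r) : Heis r ⋊[φ] Multiplicative ℤ) =
          ⟨⟨0, 0, r₀ * (n1 * (b * x2 - a * y2) - n2 * (b * x1 - a * y1) +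
            d * (x1 * y2 - x2 * y1))⟩, Multiplicative.ofAdd 0⟩ from rfl,
        commutatorElement_def, hm1, hm2, hinv, hinv, hmul, hmul, hmul]
      refine hmk _ _ _ _ _ _ _ _ (by ring) (by ring) ?_ (by ring)
      linear_combination (n1 * x2 - n2 * x1) * hb + (n2 * y1 - n1 * y2) * ha +
        (x1 * y2 - x2 * y1) * hd
    · rw [Subgroup.closure_le]
      intro g hg
      rw [Set.mem_singleton_iff] at hg
      subst hg
      have c1 : (inl (Heis.γ ^ r) : Heis r ⋊[φ] Multiplicative ℤ) ∈
          commutator (Heis r ⋊[φ] Multiplicative ℤ) := by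
        have hcab : (Heis.γ ^ r : Heis r) = ⁅(Heis.α : Heis r), Heis.β⁆ := by
          rw [commutatorElement_def, Heis.gamma_zpow]
          ext <;> simp [Heis.α, Heis.β]
        rw [hcab, map_commutatorElement, commutator_def]
        exact Subgroup.commutator_mem_commutator (Subgroup.mem_top _) (Subgroup.mem_top _)
      have c2 : (inl (Heis.γ ^ k) : Heis r ⋊[φ] Multiplicative ℤ) ∈
          commutator (Heis r ⋊[φ] Multiplicative ℤ) := by
        have hcab : (inl (Heis.γ ^ k) : Heis r ⋊[φ] Multiplicative ℤ) =
            ⁅(inr (Multiplicative.ofAdd (1:ℤ)) : Heis r ⋊[φ] Multiplicative ℤ), inl Heis.α⁆ := by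
          rw [commutatorElement_def,
            show (inr (Multiplicative.ofAdd 1) : Heis r ⋊[φ] Multiplicative ℤ) =
              ⟨⟨0, 0, 0⟩, Multiplicative.ofAdd (1 : ℤ)⟩ from rfl,
            show (inl Heis.α : Heis r ⋊[φ] Multiplicative ℤ) =
              ⟨⟨1, 0, 0⟩, Multiplicative.ofAdd 0⟩ from rfl,
            hinv, hinv, hmul, hmul, hmul, Heis.gamma_zpow,
            show (inl (⟨0, 0, k⟩ : Heis r) : Heis r ⋊[φ] Multiplicative ℤ) =
              ⟨⟨0, 0, k⟩, Multiplicative.ofAdd 0⟩ from rfl]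
          exact hmk _ _ _ _ _ _ _ _ (by ring) (by ring) (by ring) (by ring)
        rw [hcab, commutator_def]
        exact Subgroup.commutator_mem_commutator (Subgroup.mem_top _) (Subgroup.mem_top _)
      have c3 : (inl (Heis.γ ^ l) : Heis r ⋊[φ] Multiplicative ℤ) ∈
          commutator (Heis r ⋊[φ] Multiplicative ℤ) := by
        have hcab : (inl (Heis.γ ^ l) : Heis r ⋊[φ] Multiplicative ℤ) =
            ⁅(inr (Multiplicative.ofAdd (1:ℤ)) : Heis r ⋊[φ] Multiplicative ℤ), inl Heis.β⁆ := by
          rw [commutatorElement_def,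
            show (inr (Multiplicative.ofAdd 1) : Heis r ⋊[φ] Multiplicative ℤ) =
              ⟨⟨0, 0, 0⟩, Multiplicative.ofAdd (1 : ℤ)⟩ from rfl,
            show (inl Heis.β : Heis r ⋊[φ] Multiplicative ℤ) =
              ⟨⟨0, 1, 0⟩, Multiplicative.ofAdd 0⟩ from rfl,
            hinv, hinv, hmul, hmul, hmul, Heis.gamma_zpow,
            show (inl (⟨0, 0, l⟩ : Heis r) : Heis r ⋊[φ] Multiplicative ℤ) =
              ⟨⟨0, 0, l⟩, Multiplicative.ofAdd 0⟩ from rfl]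
          exact hmk _ _ _ _ _ _ _ _ (by ring) (by ring) (by ring) (by ring)
        rw [hcab, commutator_def]
        exact Subgroup.commutator_mem_commutator (Subgroup.mem_top _) (Subgroup.mem_top _)
      have hsplit : (Heis.γ ^ r₀ : Heis r) =
          (Heis.γ ^ k) ^ u * (Heis.γ ^ l) ^ v * (Heis.γ ^ r) ^ w := by
        rw [← zpow_mul, ← zpow_mul, ← zpow_mul, Heis.gamma_zpow, Heis.gamma_zpow,
          Heis.gamma_zpow, Heis.gamma_zpow]
        ext <;> simp
        linarith
      rw [hsplit, map_mul, map_mul, map_zpow _ (Heis.γ ^ k) u, map_zpow _ (Heis.γ ^ l) v, map_zpow _ (Heis.γ ^ r) w]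
      exact Subgroup.mul_mem _ (Subgroup.mul_mem _ (Subgroup.zpow_mem _ c2 u)
        (Subgroup.zpow_mem _ c3 v)) (Subgroup.zpow_mem _ c1 w)
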